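/- Let Y be a real-valued random variable with all absolute moments finite and fix a nonzero real λ. Then for all integers n≥l≥0, {n brace l}_{Y,λ} = Σ_{k=l}^{n} (−1)^{n−k} S_{1,λ}^Y(n,k) {k brace l}_{−λ}. -/

import Mathlib

open MeasureTheory Finset

noncomputable section

/-- The degenerate falling factorial `(x)_{n,λ} = x(x-λ)⋯(x-(n-1)λ)`. -/
def dff (lam x : ℝ) (n : ℕ) : ℝ := ∏ i ∈ Finset.range n, (x - i * lam)

/-- The degenerate rising factorial `⟨x⟩_{n,λ} = x(x+λ)⋯(x+(n-1)λ)`. -/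
def drf (lam x : ℝ) (n : ℕ) : ℝ := ∏ i ∈ Finset.range n, (x + i * lam)

/-- The ordinary falling factorial `(x)_n = x(x-1)⋯(x-n+1)`. -/
def ffall (x : ℝ) (n : ℕ) : ℝ := ∏ i ∈ Finset.range n, (x - i)

/-- The ordinary rising factorial `⟨x⟩_n = x(x+1)⋯(x+n-1)`. -/
def frise (x : ℝ) (n : ℕ) : ℝ := ∏ i ∈ Finset.range n, (x + i)

/-- Composition `f ∘ g` of formal power series, valid when `g` has zero constant term. -/
def pscomp (f g : PowerSeries ℝ) : PowerSeries ℝ :=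
  PowerSeries.mk fun n =>
    ∑ k ∈ Finset.range (n + 1), PowerSeries.coeff (R := ℝ) k f * PowerSeries.coeff (R := ℝ) n (g ^ k)

/-- The degenerate moment generating series `F_Y = Σ_{n≥0} E[(Y)_{n,λ}] X^n/n!`. -/
def momSeries (lam : ℝ) {Ω : Type*} [MeasurableSpace Ω] (μ : Measure Ω) (Y : Ω → ℝ) :
    PowerSeries ℝ :=
  PowerSeries.mk fun n => (∫ ω, dff lam (Y ω) n ∂μ) / (n.factorial : ℝ)

/-- Taylor series at `u = 0` of the degenerate logarithm `log_λ(1+u)`: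
`Σ_{n≥1} λ^{n-1} (1)_{n,1/λ} u^n/n!`. -/
def degLogSeries (lam : ℝ) : PowerSeries ℝ :=
  PowerSeries.mk fun n => if n = 0 then 0 else lam ^ (n - 1) * dff (1 / lam) 1 n / (n.factorial : ℝ)

/-- `G_Y`, the degenerate cumulant generating series `log_{-λ}(F_Y)`, i.e. the substitution of
`F_Y - 1` into the Taylor series of `log_{-λ}(1+u)`. -/
def cumSeries (lam : ℝ) {Ω : Type*} [MeasurableSpace Ω] (μ : Measure Ω) (Y : Ω → ℝ) :
    PowerSeries ℝ :=
  pscomp (degLogSeries (-lam)) (momSeries lam μ Y - 1)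

/-- The degenerate cumulants `κ_{n,λ}(Y) := n!·(coefficient of X^n in G_Y)`. -/
def degCumulant (lam : ℝ) {Ω : Type*} [MeasurableSpace Ω] (μ : Measure Ω) (Y : Ω → ℝ)
    (n : ℕ) : ℝ :=
  (n.factorial : ℝ) * PowerSeries.coeff (R := ℝ) n (cumSeries lam μ Y)

/-- The probabilistic degenerate Stirling numbers of the second kind
`{n brace k}_{Y,λ} := n!·(coefficient of X^n in (F_Y - 1)^k/k!)`. -/
def braceY (lam : ℝ) {Ω : Type*} [MeasurableSpace Ω] (μ : Measure Ω) (Y : Ω → ℝ)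
    (n k : ℕ) : ℝ :=
  (n.factorial : ℝ) * PowerSeries.coeff (R := ℝ) n ((momSeries lam μ Y - 1) ^ k) / (k.factorial : ℝ)

/-- The probabilistic degenerate Stirling numbers of the first kind, defined by
`(-1)^{n-k} S_{1,λ}^Y(n,k) := n!·(coefficient of X^n in G_Y^k/k!)`. -/
def S1Y (lam : ℝ) {Ω : Type*} [MeasurableSpace Ω] (μ : Measure Ω) (Y : Ω → ℝ)
    (n k : ℕ) : ℝ :=
  (-1 : ℝ) ^ (n - k) * ((n.factorial : ℝ) * PowerSeries.coeff (R := ℝ) n ((cumSeries lam μ Y) ^ k) / (k.factorial : ℝ))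

/-- Taylor series of `log(1+u)`: `Σ_{n≥1} (-1)^{n-1} u^n/n`. -/
def logSeries : PowerSeries ℝ :=
  PowerSeries.mk fun n => if n = 0 then 0 else (-1 : ℝ) ^ (n - 1) / n

/-- `F^x := exp (x · Log F)` for a power series `F` with constant term `1`. -/
def psPow (F : PowerSeries ℝ) (x : ℝ) : PowerSeries ℝ :=
  pscomp (PowerSeries.exp ℝ) (PowerSeries.C (R := ℝ) x * pscomp logSeries (F - 1))

/-- `F ↦ F/X`, i.e. the shift sending `Σ a_{n+1} X^{n+1}` (with `a_0 = 0`) to `Σ a_{n+1} X^n`. -/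
def shiftDown (F : PowerSeries ℝ) : PowerSeries ℝ :=
  PowerSeries.mk fun n => PowerSeries.coeff (R := ℝ) (n + 1) F

/-- The probabilistic degenerate Bernoulli polynomials associated with `Y`:
`Σ_{n≥0} β_{n,λ}^Y(x) X^n/n! = (X/(F_Y-1))·F_Y^x`. -/
def probBernoulli (lam : ℝ) {Ω : Type*} [MeasurableSpace Ω] (μ : Measure Ω) (Y : Ω → ℝ)
    (n : ℕ) (x : ℝ) : ℝ :=
  (n.factorial : ℝ) *
    PowerSeries.coeff (R := ℝ) n ((shiftDown (momSeries lam μ Y - 1))⁻¹ * psPow (momSeries lam μ Y) x)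

/-- The probabilistic degenerate Euler polynomials associated with `Y`:
`Σ_{n≥0} 𝓔_{n,λ}^Y(x) X^n/n! = (2/(F_Y+1))·F_Y^x`. -/
def probEuler (lam : ℝ) {Ω : Type*} [MeasurableSpace Ω] (μ : Measure Ω) (Y : Ω → ℝ)
    (n : ℕ) (x : ℝ) : ℝ :=
  (n.factorial : ℝ) *
    PowerSeries.coeff (R := ℝ) n
      (PowerSeries.C (R := ℝ) 2 * (momSeries lam μ Y + 1)⁻¹ * psPow (momSeries lam μ Y) x)

lemma dff_zero (lam x : ℝ) : dff lam x 0 = 1 := by simp [dff]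
lemma dff_succ (lam x : ℝ) (n : ℕ) : dff lam x (n + 1) = dff lam x n * (x - n * lam) :=
  Finset.prod_range_succ _ _
lemma ffall_zero (x : ℝ) : ffall x 0 = 1 := by simp [ffall]
lemma ffall_succ (x : ℝ) (n : ℕ) : ffall x (n + 1) = ffall x n * (x - n) :=
  Finset.prod_range_succ _ _

lemma coeff_pow_eq_zero {g : PowerSeries ℝ} (hg : PowerSeries.constantCoeff (R := ℝ) g = 0)
    {n k : ℕ} (h : n < k) : PowerSeries.coeff (R := ℝ) n (g ^ k) = 0 := by
  obtain ⟨t, ht⟩ := pow_dvd_pow_of_dvd (PowerSeries.X_dvd_iff.mpr hg) k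
  rw [ht, PowerSeries.coeff_X_pow_mul', if_neg (by omega)]

lemma constantCoeff_degLog (a : ℝ) : PowerSeries.constantCoeff (R := ℝ) (degLogSeries a) = 0 := by
  have : PowerSeries.coeff (R := ℝ) 0 (degLogSeries a) = 0 := by simp [degLogSeries]
  simpa using this

lemma coeff_one_add_X_mul (f : PowerSeries ℝ) (n : ℕ) :
    PowerSeries.coeff (R := ℝ) n ((1 + PowerSeries.X) * f) =
      PowerSeries.coeff (R := ℝ) n f + if n = 0 then 0 else PowerSeries.coeff (R := ℝ) (n - 1) f := by
  cases n with
  | zero =>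
    simp only [add_mul, one_mul, map_add, if_pos rfl, add_right_inj]
    simpa using (PowerSeries.coeff_zero_eq_constantCoeff (R := ℝ)) ▸ rfl
  | succ m =>
    rw [add_mul, one_mul, map_add, PowerSeries.coeff_succ_X_mul]
    simp

lemma degLog_ODE (a : ℝ) (ha : a ≠ 0) :
    (1 + PowerSeries.X) * (PowerSeries.derivative ℝ (degLogSeries a)) =
      1 + PowerSeries.C (R := ℝ) a * degLogSeries a := by
  ext n
  rw [coeff_one_add_X_mul]
  cases n with
  | zero =>
    simp [PowerSeries.coeff_derivative, degLogSeries, dff]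
  | succ m =>
    simp only [Nat.succ_ne_zero, if_false, Nat.add_sub_cancel, PowerSeries.coeff_derivative,
      map_add, PowerSeries.coeff_one, PowerSeries.coeff_C_mul, degLogSeries,
      PowerSeries.coeff_mk, zero_add]
    cases m with
    | zero =>
      simp only [dff, Finset.prod_range_succ, Finset.prod_range_zero]
      field_simp
      norm_num [Nat.factorial]
      ring
    | succ p =>
      have hd : dff (1/a) 1 (p+1+1+1) = dff (1/a) 1 (p+1+1) * (1 - (p+1+1) * (1/a)) := by
        rw [dff_succ]; push_cast; ring_nf
      rw [hd]
      have hf1 : ((p+1+1+1).factorial : ℝ) = (p+1+1+1) * ((p+1+1).factorial : ℝ) := by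
        rw [Nat.factorial_succ]; push_cast; ring
      have hfne : ((p+1+1).factorial : ℝ) ≠ 0 := Nat.cast_ne_zero.mpr (Nat.factorial_ne_zero _)
      rw [hf1]
      field_simp
      push_cast; ring

lemma degLog_c_rec (a : ℝ) (ha : a ≠ 0) (k n : ℕ) :
    ((n : ℝ) + 1) * PowerSeries.coeff (R := ℝ) (n + 1) ((degLogSeries a) ^ (k + 1)) =
      ((k : ℝ) + 1) * PowerSeries.coeff (R := ℝ) n ((degLogSeries a) ^ k) +
        (a * ((k : ℝ) + 1) - n) * PowerSeries.coeff (R := ℝ) n ((degLogSeries a) ^ (k + 1)) := by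
  set L := degLogSeries a with hL
  have hD : (PowerSeries.derivative ℝ) (L ^ (k + 1)) =
      (k + 1) • (L ^ k * (PowerSeries.derivative ℝ) L) := by
    simpa [smul_eq_mul] using (PowerSeries.derivative ℝ).leibniz_pow L (k + 1)
  have h2 : (1 + PowerSeries.X) * (PowerSeries.derivative ℝ) (L ^ (k + 1)) =
      (k + 1) • (L ^ k + PowerSeries.C (R := ℝ) a * L ^ (k + 1)) := by
    rw [hD, mul_smul_comm]
    congr 1
    calc (1 + PowerSeries.X) * (L ^ k * (PowerSeries.derivative ℝ) L)
        = L ^ k * ((1 + PowerSeries.X) * (PowerSeries.derivative ℝ) L) := by ring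
      _ = L ^ k * (1 + PowerSeries.C (R := ℝ) a * L) := by rw [degLog_ODE a ha]
      _ = L ^ k + PowerSeries.C (R := ℝ) a * L ^ (k + 1) := by ring
  have h3 := congrArg (PowerSeries.coeff (R := ℝ) n) h2
  rw [coeff_one_add_X_mul, map_nsmul, map_add, PowerSeries.coeff_C_mul,
    PowerSeries.coeff_derivative] at h3
  cases n with
  | zero =>
    simp only [if_pos rfl, add_zero, nsmul_eq_mul] at h3
    push_cast at h3 ⊢
    linarith [h3]
  | succ m =>
    rw [if_neg (Nat.succ_ne_zero m), Nat.add_sub_cancel] at h3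
    rw [PowerSeries.coeff_derivative] at h3
    simp only [nsmul_eq_mul] at h3
    push_cast at h3 ⊢
    nlinarith [h3]

def s1c (a : ℝ) (n k : ℕ) : ℝ :=
  (n.factorial : ℝ) * PowerSeries.coeff (R := ℝ) n ((degLogSeries a) ^ k) / (k.factorial : ℝ)

lemma s1c_eq_zero (a : ℝ) {n k : ℕ} (h : n < k) : s1c a n k = 0 := by
  unfold s1c
  rw [coeff_pow_eq_zero (constantCoeff_degLog a) h]
  simp

lemma s1c_zero_right (a : ℝ) (n : ℕ) : s1c a n 0 = if n = 0 then 1 else 0 := by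
  unfold s1c
  rw [pow_zero, PowerSeries.coeff_one]
  split <;> simp_all [Nat.factorial]

lemma s1c_diag (a : ℝ) (n : ℕ) : s1c a n n = s1c a n n := rfl

lemma s1c_rec (a : ℝ) (ha : a ≠ 0) (m k : ℕ) :
    s1c a (m + 1) (k + 1) = s1c a m k + (a * ((k : ℝ) + 1) - m) * s1c a m (k + 1) := by
  have hrec := degLog_c_rec a ha k m
  have hm : ((m.factorial : ℝ)) ≠ 0 := Nat.cast_ne_zero.mpr (Nat.factorial_ne_zero _)
  have hk : ((k.factorial : ℝ)) ≠ 0 := Nat.cast_ne_zero.mpr (Nat.factorial_ne_zero _)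
  have h1 : ((m : ℝ) + 1) * (m.factorial : ℝ) *
        PowerSeries.coeff (R := ℝ) (m + 1) ((degLogSeries a) ^ (k + 1))
      = (m.factorial : ℝ) * (((k : ℝ) + 1) * PowerSeries.coeff (R := ℝ) m ((degLogSeries a) ^ k) +
          (a * ((k : ℝ) + 1) - m) * PowerSeries.coeff (R := ℝ) m ((degLogSeries a) ^ (k + 1))) := by
    rw [mul_comm ((m : ℝ) + 1) (m.factorial : ℝ), mul_assoc, hrec]
  unfold s1c
  rw [Nat.factorial_succ m, Nat.factorial_succ k]
  push_cast
  rw [h1]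
  field_simp

lemma ffall_eq_sum (a : ℝ) (ha : a ≠ 0) (m : ℕ) (x : ℝ) :
    ffall x m = ∑ k ∈ Finset.range (m + 1), s1c a m k * dff a x k := by
  induction m with
  | zero =>
    simp [ffall_zero, dff_zero, s1c]
  | succ m ih =>
    have h0 : s1c a (m + 1) 0 = 0 := by
      rw [s1c_zero_right, if_neg (Nat.succ_ne_zero m)]
    set g : ℕ → ℝ := fun j => (a * j - m) * s1c a m j * dff a x j with hg
    have hB : ∑ k ∈ Finset.range (m + 1), g (k + 1) = ∑ k ∈ Finset.range (m + 1), g k := by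
      have e1 : ∑ k ∈ Finset.range (m + 2), g k
          = (∑ k ∈ Finset.range (m + 1), g (k + 1)) + g 0 :=
        Finset.sum_range_succ' g (m + 1)
      have e2 : ∑ k ∈ Finset.range (m + 2), g k
          = (∑ k ∈ Finset.range (m + 1), g k) + g (m + 1) :=
        Finset.sum_range_succ g (m + 1)
      have hg0 : g 0 = 0 := by
        simp only [hg, Nat.cast_zero, mul_zero, zero_sub, s1c_zero_right]
        rcases Nat.eq_zero_or_pos m with hm | hm
        · subst hm; simp
        · rw [if_neg (by omega)]; ring
      have hgm : g (m + 1) = 0 := by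
        simp only [hg, s1c_eq_zero a (Nat.lt_succ_self m)]
        ring
      rw [hg0] at e1; rw [hgm] at e2
      linarith [e1, e2]
    rw [Finset.sum_range_succ' (fun k => s1c a (m + 1) k * dff a x k) (m + 1)]
    rw [h0, zero_mul, add_zero, ffall_succ, ih]
    have hcg : ∀ k ∈ Finset.range (m + 1), s1c a (m + 1) (k + 1) * dff a x (k + 1)
        = s1c a m k * dff a x (k + 1) + g (k + 1) := by
      intro k _
      rw [s1c_rec a ha m k, hg]
      push_cast
      ring
    rw [Finset.sum_congr rfl hcg, Finset.sum_add_distrib, hB,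
      ← Finset.sum_add_distrib, Finset.sum_mul]
    apply Finset.sum_congr rfl
    intro k _
    rw [dff_succ, hg]
    push_cast
    ring

lemma ffall_nat_self (j : ℕ) : ffall (j : ℝ) j = (j.factorial : ℝ) := by
  induction j with
  | zero => simp [ffall_zero]
  | succ j ih =>
    unfold ffall
    rw [Finset.prod_range_succ']
    have h1 : ∀ i ∈ Finset.range j, (((j : ℕ) + 1 : ℕ) : ℝ) - ((i + 1 : ℕ) : ℝ)
        = (j : ℝ) - i := by intro i _; push_cast; ring
    rw [Finset.prod_congr rfl h1]
    have : (∏ i ∈ Finset.range j, ((j : ℝ) - i)) = (j.factorial : ℝ) := ih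
    rw [this, Nat.factorial_succ]
    push_cast
    ring

lemma ffall_nat_eq_zero {j i : ℕ} (h : j < i) : ffall (j : ℝ) i = 0 := by
  unfold ffall
  apply Finset.prod_eq_zero (Finset.mem_range.mpr h)
  simp

lemma ffall_indep (b : ℕ → ℝ) (M : ℕ)
    (h : ∀ x : ℝ, ∑ j ∈ Finset.range M, b j * ffall x j = 0) :
    ∀ j, j < M → b j = 0 := by
  intro j
  induction j using Nat.strong_induction_on with
  | _ j ih =>
    intro hjM
    have h0 := h (j : ℝ)
    rw [Finset.sum_eq_single j
      (fun i hi hij => by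
        rcases Nat.lt_or_ge i j with hlt | hge
        · rw [ih i hlt (lt_trans hlt hjM)]; ring
        · rw [ffall_nat_eq_zero (lt_of_le_of_ne hge (Ne.symm hij))]; ring)
      (fun hj => absurd (Finset.mem_range.mpr hjM) hj)] at h0
    rw [ffall_nat_self] at h0
    have : (j.factorial : ℝ) ≠ 0 := Nat.cast_ne_zero.mpr (Nat.factorial_ne_zero _)
    exact (mul_eq_zero.mp h0).resolve_right this

lemma ortho (a : ℝ) (ha : a ≠ 0) (T : ℕ → ℕ → ℝ)
    (hT : ∀ (x : ℝ) (n : ℕ), dff a x n = ∑ k ∈ Finset.range (n + 1), T n k * ffall x k)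
    (hT0 : ∀ k j, k < j → T k j = 0) (m j : ℕ) (hj : j ≤ m) :
    (∑ k ∈ Finset.range (m + 1), s1c a m k * T k j) = if m = j then 1 else 0 := by
  have key : ∀ x : ℝ, ∑ i ∈ Finset.range (m + 1),
      ((∑ k ∈ Finset.range (m + 1), s1c a m k * T k i) - (if i = m then 1 else 0)) *
        ffall x i = 0 := by
    intro x
    have h1 : ffall x m = ∑ k ∈ Finset.range (m + 1), s1c a m k * dff a x k :=
      ffall_eq_sum a ha m x
    have h2 : ∀ k ∈ Finset.range (m + 1), s1c a m k * dff a x k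
        = ∑ i ∈ Finset.range (m + 1), s1c a m k * (T k i * ffall x i) := by
      intro k hk
      rw [hT x k, Finset.mul_sum]
      apply Finset.sum_subset
      · intro i hi
        simp only [Finset.mem_range] at hi hk ⊢
        omega
      · intro i _ hni
        have : k < i := by
          simp only [Finset.mem_range, not_lt] at hni
          omega
        rw [hT0 k i this]
        ring
    rw [Finset.sum_congr rfl h2, Finset.sum_comm] at h1
    have h3 : ∑ i ∈ Finset.range (m + 1),
        (∑ k ∈ Finset.range (m + 1), s1c a m k * T k i) * ffall x i = ffall x m := by
      rw [h1]
      apply Finset.sum_congr rfl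
      intro i _
      rw [Finset.sum_mul]
      apply Finset.sum_congr rfl
      intro k _
      ring
    have h4 : ∑ i ∈ Finset.range (m + 1),
        (if i = m then (1 : ℝ) else 0) * ffall x i = ffall x m := by
      simp only [ite_mul, one_mul, zero_mul]
      rw [Finset.sum_ite_eq' (Finset.range (m + 1)) m (fun i => ffall x i)]
      rw [if_pos (Finset.mem_range.mpr (Nat.lt_succ_self m))]
    calc ∑ i ∈ Finset.range (m + 1),
        ((∑ k ∈ Finset.range (m + 1), s1c a m k * T k i) - (if i = m then 1 else 0)) *
          ffall x i
        = (∑ i ∈ Finset.range (m + 1),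
            (∑ k ∈ Finset.range (m + 1), s1c a m k * T k i) * ffall x i) -
          ∑ i ∈ Finset.range (m + 1), (if i = m then (1 : ℝ) else 0) * ffall x i := by
          rw [← Finset.sum_sub_distrib]
          apply Finset.sum_congr rfl
          intro i _
          ring
      _ = 0 := by rw [h3, h4, sub_self]
  have hres := ffall_indep _ (m + 1) key j (by omega)
  have : (∑ k ∈ Finset.range (m + 1), s1c a m k * T k j) = (if j = m then (1:ℝ) else 0) := by
    linarith [hres]
  rw [this]
  by_cases hjm : j = m
  · rw [if_pos hjm, if_pos hjm.symm]
  · rw [if_neg hjm, if_neg (fun h => hjm h.symm)]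

lemma coeff_pscomp (f g : PowerSeries ℝ) (n : ℕ) :
    PowerSeries.coeff (R := ℝ) n (pscomp f g) =
      ∑ k ∈ Finset.range (n + 1), PowerSeries.coeff (R := ℝ) k f * PowerSeries.coeff (R := ℝ) n (g ^ k) :=
  PowerSeries.coeff_mk _ _

lemma coeff_pscomp_eq (f g : PowerSeries ℝ) (hg : PowerSeries.constantCoeff (R := ℝ) g = 0)
    {m N : ℕ} (h : m < N) :
    PowerSeries.coeff (R := ℝ) m (pscomp f g) =
      PowerSeries.coeff (R := ℝ) m (∑ k ∈ Finset.range N, PowerSeries.C (R := ℝ) (PowerSeries.coeff (R := ℝ) k f) * g ^ k) := by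
  rw [coeff_pscomp, map_sum]
  simp only [PowerSeries.coeff_C_mul]
  apply Finset.sum_subset
  · intro k hk
    simp only [Finset.mem_range] at hk ⊢
    omega
  · intro k _ hk2
    rw [coeff_pow_eq_zero hg (by simp only [Finset.mem_range, not_lt] at hk2; omega)]
    ring

lemma coeff_mul_congr {A A' B B' : PowerSeries ℝ} {n : ℕ}
    (hA : ∀ m ≤ n, PowerSeries.coeff (R := ℝ) m A = PowerSeries.coeff (R := ℝ) m A')
    (hB : ∀ m ≤ n, PowerSeries.coeff (R := ℝ) m B = PowerSeries.coeff (R := ℝ) m B') :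
    PowerSeries.coeff (R := ℝ) n (A * B) = PowerSeries.coeff (R := ℝ) n (A' * B') := by
  rw [PowerSeries.coeff_mul, PowerSeries.coeff_mul]
  apply Finset.sum_congr rfl
  intro p hp
  rw [Finset.HasAntidiagonal.mem_antidiagonal] at hp
  rw [hA p.1 (by omega), hB p.2 (by omega)]

lemma pscomp_mul (f₁ f₂ g : PowerSeries ℝ) (hg : PowerSeries.constantCoeff (R := ℝ) g = 0) :
    pscomp (f₁ * f₂) g = pscomp f₁ g * pscomp f₂ g := by
  ext n
  have hR : PowerSeries.coeff (R := ℝ) n (pscomp f₁ g * pscomp f₂ g) =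
      PowerSeries.coeff (R := ℝ) n
        ((∑ i ∈ Finset.range (n + 1), PowerSeries.C (R := ℝ) (PowerSeries.coeff (R := ℝ) i f₁) * g ^ i) *
          (∑ j ∈ Finset.range (n + 1), PowerSeries.C (R := ℝ) (PowerSeries.coeff (R := ℝ) j f₂) * g ^ j)) :=
    coeff_mul_congr (fun m hm => coeff_pscomp_eq f₁ g hg (by omega))
      (fun m hm => coeff_pscomp_eq f₂ g hg (by omega))
  have hprod : ∀ i j : ℕ,
      (PowerSeries.C (R := ℝ) (PowerSeries.coeff (R := ℝ) i f₁) * g ^ i) *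
        (PowerSeries.C (R := ℝ) (PowerSeries.coeff (R := ℝ) j f₂) * g ^ j) =
      PowerSeries.C (R := ℝ) (PowerSeries.coeff (R := ℝ) i f₁ * PowerSeries.coeff (R := ℝ) j f₂) * g ^ (i + j) := by
    intro i j
    rw [mul_mul_mul_comm, ← map_mul, pow_add]
  rw [hR, Finset.sum_mul_sum]
  simp only [hprod, map_sum, PowerSeries.coeff_C_mul]
  -- RHS is now ∑ i ∑ j t(i,j); rewrite as sum over product then biUnion
  rw [← Finset.sum_product']
  set t : ℕ × ℕ → ℝ := fun p =>
    PowerSeries.coeff (R := ℝ) p.1 f₁ * PowerSeries.coeff (R := ℝ) p.2 f₂ *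
      PowerSeries.coeff (R := ℝ) n (g ^ (p.1 + p.2)) with ht
  have hdisj : (↑(Finset.range (n + 1)) : Set ℕ).PairwiseDisjoint
      (fun k => Finset.HasAntidiagonal.antidiagonal k) := by
    intro k₁ _ k₂ _ hne
    apply Finset.disjoint_left.mpr
    intro p h1 h2
    exact hne (by rw [← Finset.HasAntidiagonal.mem_antidiagonal.mp h1, ← Finset.HasAntidiagonal.mem_antidiagonal.mp h2])
  have hLHS : PowerSeries.coeff (R := ℝ) n (pscomp (f₁ * f₂) g) =
      ∑ k ∈ Finset.range (n + 1), ∑ p ∈ Finset.HasAntidiagonal.antidiagonal k, t p := by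
    rw [coeff_pscomp]
    apply Finset.sum_congr rfl
    intro k _
    rw [PowerSeries.coeff_mul, Finset.sum_mul]
    apply Finset.sum_congr rfl
    intro p hp
    rw [Finset.HasAntidiagonal.mem_antidiagonal] at hp
    rw [ht]
    simp only [hp]
  rw [hLHS, ← Finset.sum_biUnion hdisj]
  apply Finset.sum_subset
  · intro p hp
    simp only [Finset.mem_biUnion, Finset.mem_range, Finset.HasAntidiagonal.mem_antidiagonal] at hp
    obtain ⟨k, hk, hpk⟩ := hp
    simp only [Finset.mem_product, Finset.mem_range]
    omega
  · intro p hp hnp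
    simp only [Finset.mem_product, Finset.mem_range] at hp
    have hgt : n < p.1 + p.2 := by
      by_contra hle
      push_neg at hle
      exact hnp (Finset.mem_biUnion.mpr ⟨p.1 + p.2, Finset.mem_range.mpr (by omega),
        Finset.HasAntidiagonal.mem_antidiagonal.mpr rfl⟩)
    rw [ht]
    simp only
    rw [coeff_pow_eq_zero hg hgt]
    ring

lemma pscomp_one (g : PowerSeries ℝ) : pscomp 1 g = 1 := by
  ext n
  rw [coeff_pscomp]
  rw [Finset.sum_eq_single 0
    (fun k hk hk0 => by rw [PowerSeries.coeff_one, if_neg hk0]; ring)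
    (fun h => absurd (Finset.mem_range.mpr (Nat.succ_pos n)) h)]
  rw [PowerSeries.coeff_one, if_pos rfl, pow_zero, one_mul]

lemma pscomp_pow (f g : PowerSeries ℝ) (hg : PowerSeries.constantCoeff (R := ℝ) g = 0) (k : ℕ) :
    (pscomp f g) ^ k = pscomp (f ^ k) g := by
  induction k with
  | zero => rw [pow_zero, pow_zero, pscomp_one]
  | succ k ih => rw [pow_succ, pow_succ, ih, pscomp_mul _ _ _ hg]

theorem braceY_key (lam : ℝ) (hlam : lam ≠ 0)
    (St2neg : ℕ → ℕ → ℝ)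
    (hSt2neg : ∀ (x : ℝ) (n : ℕ),
      dff (-lam) x n = ∑ k ∈ Finset.range (n + 1), St2neg n k * ffall x k)
    (n l : ℕ) (hln : l ≤ n)
    (momS cumS : PowerSeries ℝ)
    (hmomS : PowerSeries.coeff (R := ℝ) 0 momS = 1)
    (hcum : cumS = pscomp (degLogSeries (-lam)) (momS - 1)) :
    (n.factorial : ℝ) * PowerSeries.coeff (R := ℝ) n ((momS - 1) ^ l) / (l.factorial : ℝ) =
      ∑ k ∈ Finset.Icc l n, (-1 : ℝ) ^ (n - k) *
        ((-1 : ℝ) ^ (n - k) * ((n.factorial : ℝ) * PowerSeries.coeff (R := ℝ) n (cumS ^ k) / (k.factorial : ℝ))) *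
        St2neg k l := by
  have ha : (-lam) ≠ 0 := neg_ne_zero.mpr hlam
  set L : PowerSeries ℝ := degLogSeries (-lam) with hL
  set W : PowerSeries ℝ := momS - 1 with hWdef
  have hWc : PowerSeries.constantCoeff (R := ℝ) W = 0 := by
    rw [hWdef, map_sub, map_one, ← PowerSeries.coeff_zero_eq_constantCoeff, hmomS, sub_self]
  have hGk : ∀ k : ℕ, PowerSeries.coeff (R := ℝ) n (cumS ^ k) =
      ∑ m ∈ Finset.range (n + 1),
        PowerSeries.coeff (R := ℝ) m (L ^ k) * PowerSeries.coeff (R := ℝ) n (W ^ m) := by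
    intro k
    rw [hcum, pscomp_pow _ _ hWc, coeff_pscomp]
  set T : ℕ → ℕ → ℝ := fun p q => if q ≤ p then St2neg p q else 0 with hT_def
  have hT : ∀ (x : ℝ) (N : ℕ),
      dff (-lam) x N = ∑ k ∈ Finset.range (N + 1), T N k * ffall x k := by
    intro x N
    rw [hSt2neg x N]
    apply Finset.sum_congr rfl
    intro k hk
    rw [hT_def]
    simp only
    rw [if_pos (by simp only [Finset.mem_range] at hk; omega)]
  have hT0 : ∀ k j, k < j → T k j = 0 := by
    intro k j h
    rw [hT_def]
    simp only
    rw [if_neg (by omega)]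
  have inner : ∀ m ∈ Finset.range (n + 1),
      (∑ k ∈ Finset.Icc l n,
          PowerSeries.coeff (R := ℝ) m (L ^ k) / (k.factorial : ℝ) * St2neg k l)
        = if m = l then 1 / (l.factorial : ℝ) else 0 := by
    intro m hm
    rw [Finset.mem_range] at hm
    rcases Nat.lt_or_ge m l with hml | hml
    · rw [if_neg (by omega)]
      apply Finset.sum_eq_zero
      intro k hk
      rw [Finset.mem_Icc] at hk
      rw [hL, coeff_pow_eq_zero (constantCoeff_degLog _) (by omega)]
      ring
    · have horto := ortho (-lam) ha T hT hT0 m l hml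
      have hmfac : ((m.factorial : ℝ)) ≠ 0 := Nat.cast_ne_zero.mpr (Nat.factorial_ne_zero _)
      have e1 : ∑ k ∈ Finset.Icc l n,
            PowerSeries.coeff (R := ℝ) m (L ^ k) / (k.factorial : ℝ) * St2neg k l
          = ∑ k ∈ Finset.Icc l m,
            PowerSeries.coeff (R := ℝ) m (L ^ k) / (k.factorial : ℝ) * St2neg k l := by
        symm
        apply Finset.sum_subset
        · intro k hk
          rw [Finset.mem_Icc] at hk ⊢
          omega
        · intro k hk hnk
          rw [Finset.mem_Icc] at hk
          rw [Finset.mem_Icc, not_and, not_le] at hnk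
          rw [hL, coeff_pow_eq_zero (constantCoeff_degLog _) (by omega)]
          ring
      have e2 : ∑ k ∈ Finset.Icc l m,
            PowerSeries.coeff (R := ℝ) m (L ^ k) / (k.factorial : ℝ) * St2neg k l
          = ∑ k ∈ Finset.range (m + 1),
            PowerSeries.coeff (R := ℝ) m (L ^ k) / (k.factorial : ℝ) * T k l := by
        have e3 : ∀ k ∈ Finset.Icc l m,
            PowerSeries.coeff (R := ℝ) m (L ^ k) / (k.factorial : ℝ) * St2neg k l
              = PowerSeries.coeff (R := ℝ) m (L ^ k) / (k.factorial : ℝ) * T k l := by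
          intro k hk
          rw [Finset.mem_Icc] at hk
          rw [hT_def]
          simp only
          rw [if_pos hk.1]
        rw [Finset.sum_congr rfl e3]
        apply Finset.sum_subset
        · intro k hk
          rw [Finset.mem_Icc] at hk
          rw [Finset.mem_range]
          omega
        · intro k hk hnk
          rw [Finset.mem_range] at hk
          rw [Finset.mem_Icc, not_and, not_le] at hnk
          rw [hT0 k l (by omega)]
          ring
      have e4 : ∑ k ∈ Finset.range (m + 1),
            PowerSeries.coeff (R := ℝ) m (L ^ k) / (k.factorial : ℝ) * T k l
          = (1 / (m.factorial : ℝ)) *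
            ∑ k ∈ Finset.range (m + 1), s1c (-lam) m k * T k l := by
        rw [Finset.mul_sum]
        apply Finset.sum_congr rfl
        intro k _
        rw [s1c, hL]
        field_simp
      rw [e1, e2, e4, horto]
      by_cases h : m = l
      · rw [if_pos h, if_pos h]
        subst h
        ring
      · rw [if_neg h, if_neg h]
        ring
  have hsign : ∀ k ∈ Finset.Icc l n, (-1 : ℝ) ^ (n - k) *
      ((-1 : ℝ) ^ (n - k) * ((n.factorial : ℝ) * PowerSeries.coeff (R := ℝ) n (cumS ^ k) /
        (k.factorial : ℝ))) * St2neg k l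
      = ∑ m ∈ Finset.range (n + 1),
          ((n.factorial : ℝ) * PowerSeries.coeff (R := ℝ) n (W ^ m)) *
            (PowerSeries.coeff (R := ℝ) m (L ^ k) / (k.factorial : ℝ) * St2neg k l) := by
    intro k _
    have hone : (-1 : ℝ) ^ (n - k) * (-1 : ℝ) ^ (n - k) = 1 := by
      rw [← mul_pow]
      norm_num
    rw [← mul_assoc, hone, one_mul, hGk k, Finset.mul_sum, Finset.sum_div,
      Finset.sum_mul]
    apply Finset.sum_congr rfl
    intro m _
    ring
  rw [Finset.sum_congr rfl hsign, Finset.sum_comm]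
  rw [Finset.sum_congr rfl (fun m hm => by rw [← Finset.mul_sum, inner m hm])]
  rw [Finset.sum_eq_single l (fun m _ hml => by rw [if_neg hml]; ring)
    (fun h => absurd (Finset.mem_range.mpr (by omega)) h)]
  rw [if_pos rfl]
  ring

theorem braceY_eq_sum_S1Y_mul_degStirling2 {Ω : Type*} [MeasurableSpace Ω] (μ : MeasureTheory.Measure Ω)
    [MeasureTheory.IsProbabilityMeasure μ] (Y : Ω → ℝ) (hY : Measurable Y)
    (hmom : ∀ n : ℕ, MeasureTheory.Integrable (fun ω => |Y ω| ^ n) μ)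
    (lam : ℝ) (hlam : lam ≠ 0)
    (St2neg : ℕ → ℕ → ℝ)
    (hSt2neg : ∀ (x : ℝ) (n : ℕ),
      dff (-lam) x n = ∑ k ∈ Finset.range (n + 1), St2neg n k * ffall x k)
    (n l : ℕ) (hln : l ≤ n) :
    braceY lam μ Y n l =
      ∑ k ∈ Finset.Icc l n, (-1 : ℝ) ^ (n - k) * S1Y lam μ Y n k * St2neg k l := by
  have hmomS : PowerSeries.coeff (R := ℝ) 0 (momSeries lam μ Y) = 1 := by
    rw [momSeries, PowerSeries.coeff_mk]
    simp [dff]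
  have hkey := braceY_key lam hlam St2neg hSt2neg n l hln (momSeries lam μ Y)
    (cumSeries lam μ Y) hmomS rfl
  unfold braceY S1Y
  exact hkey


end
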